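/- Let (v, a) be a maximal product two-action game with m players. Then the set of Nash equilibria γ ∈ [0,1]^m is finite of cardinality (V(m) + !m)/2, where V(m) = Σ_{l=0}^m binom(m,l)·2^l·!(m−l). -/

import Mathlib

open Finset
open scoped Classical

/-- `λ^i(γ) = (−1)^{v_i} · ∏_{j ≠ i} (γ_j − a^i_j)` for a product two-action game. -/
def lamP {m : ℕ} (v : Fin m → ℕ) (a : Fin m → Fin m → ℝ) (i : Fin m) (γ : Fin m → ℝ) : ℝ :=
  (-1 : ℝ) ^ (v i) * ∏ j ∈ Finset.univ.erase i, (γ j - a i j)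

/-- `γ ∈ [0,1]^m`. -/
def InCube {m : ℕ} (γ : Fin m → ℝ) : Prop := ∀ i, 0 ≤ γ i ∧ γ i ≤ 1

/-- Equilibrium candidate: `λ^i(γ) = 0` for every `i` with `0 < γ_i < 1`. -/
def IsEqCand {m : ℕ} (v : Fin m → ℕ) (a : Fin m → Fin m → ℝ) (γ : Fin m → ℝ) : Prop :=
  InCube γ ∧ ∀ i, 0 < γ i → γ i < 1 → lamP v a i γ = 0

/-- Nash equilibrium of the product two-action game. -/
def IsNashP {m : ℕ} (v : Fin m → ℕ) (a : Fin m → Fin m → ℝ) (γ : Fin m → ℝ) : Prop :=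
  IsEqCand v a γ ∧ (∀ i, γ i = 0 → lamP v a i γ ≤ 0) ∧ (∀ i, γ i = 1 → 0 ≤ lamP v a i γ)

/-- The coefficient conditions of a product two-action game:
`a^i_j ∈ (0,1)` and `a^{i₁}_j ≠ a^{i₂}_j` for distinct `i₁, i₂ ≠ j`. -/
def GoodCoef {m : ℕ} (a : Fin m → Fin m → ℝ) : Prop :=
  (∀ i j : Fin m, i ≠ j → 0 < a i j ∧ a i j < 1) ∧
  (∀ j i₁ i₂ : Fin m, i₁ ≠ j → i₂ ≠ j → i₁ ≠ i₂ → a i₁ j ≠ a i₂ j)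

/-- `EC(π)`. -/
def ECset {m : ℕ} (a : Fin m → Fin m → ℝ) (π : Equiv.Perm (Fin m)) : Set (Fin m → ℝ) :=
  {γ | InCube γ ∧ (∀ i, π i = i → (γ i = 0 ∨ γ i = 1)) ∧ (∀ j, π j ≠ j → γ j = a (π j) j)}

/-- `|F(π)|`, the number of fixed points of `π`. -/
def fixedCard {m : ℕ} (π : Equiv.Perm (Fin m)) : ℕ :=
  (Finset.univ.filter fun i => π i = i).card

/-- `V(m) = Σ_{l=0}^m binom(m,l)·2^l·!(m−l)`. -/
def Vnum (m : ℕ) : ℕ :=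
  ∑ l ∈ Finset.range (m + 1), Nat.choose m l * 2 ^ l * numDerangements (m - l)

/-- `σj` is the `j`-th associated permutation: it fixes `j` and sorts the
`a^i_j` (`i ≠ j`) decreasingly. -/
def IsAssoc {m : ℕ} (a : Fin m → Fin m → ℝ) (j : Fin m) (σj : Equiv.Perm (Fin m)) : Prop :=
  σj j = j ∧ ∀ i₁ i₂ : Fin m, i₁ ≠ j → i₂ ≠ j → i₁ ≠ i₂ → (σj i₁ < σj i₂ ↔ a i₂ j < a i₁ j)

/-- The increment `Inc(γ,i)` of an equilibrium candidate `γ ∈ EC(π)` at `i ∈ F(π)`. -/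
noncomputable def IncMap {m : ℕ} (v : Fin m → ℕ) (σ : Fin m → Equiv.Perm (Fin m))
    (π : Equiv.Perm (Fin m)) (γ : Fin m → ℝ) (i : Fin m) : ℕ :=
  (1 + (if γ i = 1 then 1 else 0) + v i
    + (Finset.univ.filter fun k => π k = k ∧ k ≠ i ∧ γ k = 0).card
    + ∑ j ∈ Finset.univ.filter (fun j => π j ≠ j),
        (if (σ j) i ≤ (σ j) (π j) then 1 else 0)) % 2

/-- `g(π)`: the equilibrium candidate in `EC(π)` with `γ_i = 1` for all `i ∈ F(π)`. -/
noncomputable def gP {m : ℕ} (a : Fin m → Fin m → ℝ) (π : Equiv.Perm (Fin m)) : Fin m → ℝ :=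
  fun j => if π j = j then 1 else a (π j) j

/-- A product two-action game is maximal if for every permutation `π` with
`F(π) ≠ ∅` exactly `2^{|F(π)|−1}` elements of `EC(π)` are Nash equilibria. -/
def IsMaximal {m : ℕ} (v : Fin m → ℕ) (a : Fin m → Fin m → ℝ) : Prop :=
  ∀ π : Equiv.Perm (Fin m), (∃ i, π i = i) →
    {γ ∈ ECset a π | IsNashP v a γ}.ncard = 2 ^ (fixedCard π - 1)

/-- `χ(a,b) = 1` iff `a ≥ b` (on naturals). -/
def chiN (x y : ℕ) : ℕ := if y ≤ x then 1 else 0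

/-- The permutation `δ^i` of `{1,…,m}`. -/
def deltaFun (m i j : ℕ) : ℕ :=
  if j = i then i
  else if j < i then m - i + j + chiN (m - i + j) i
  else j - i + chiN (j - i) i

section AuxStmt14

open Equiv Equiv.Perm

private noncomputable def fiberEquivAux {m : ℕ} (S : Finset (Fin m)) :
    {π : Equiv.Perm (Fin m) // ∀ i, π i = i ↔ i ∈ S} ≃ derangements {x : Fin m // x ∉ S} := by
  refine ⟨fun π => ⟨(π : Equiv.Perm (Fin m)).subtypePerm (p := fun x => x ∉ S) ?_, ?_⟩,
    fun σ => ⟨Equiv.Perm.ofSubtype (σ : Equiv.Perm {x : Fin m // x ∉ S}), ?_⟩, ?_, ?_⟩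
  · intro x
    obtain ⟨π, hπ⟩ := π
    constructor
    · intro hx hmem
      have hx' : π x ∉ S := hx
      rw [(hπ x).mpr hmem] at hx'; exact hx' hmem
    · intro hx hmem
      have hmem' : π x ∈ S := hmem
      have h1 : π (π x) = π x := (hπ (π x)).mpr hmem'
      have h2 : π x = x := π.injective h1
      rw [h2] at hmem'; exact hx hmem'
  · intro x hx
    obtain ⟨π, hπ⟩ := π
    have : π (x : Fin m) = (x : Fin m) := congrArg Subtype.val hx
    exact x.2 ((hπ x).mp this)
  · intro i
    by_cases hi : i ∈ S
    · simp only [hi, iff_true]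
      exact Equiv.Perm.ofSubtype_apply_of_not_mem (p := fun x => x ∉ S) σ.1 (not_not_intro hi)
    · simp only [hi, iff_false]
      rw [Equiv.Perm.ofSubtype_apply_of_mem (p := fun x => x ∉ S) σ.1 hi]
      intro h
      exact σ.2 ⟨i, hi⟩ (Subtype.ext h)
  · intro π
    apply Subtype.ext
    apply Equiv.ext
    intro x
    show Equiv.Perm.ofSubtype _ x = (π : Equiv.Perm (Fin m)) x
    by_cases hx : x ∈ S
    · rw [Equiv.Perm.ofSubtype_apply_of_not_mem (p := fun x => x ∉ S) _ (not_not_intro hx)]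
      exact ((π.2 x).mpr hx).symm
    · exact Equiv.Perm.ofSubtype_apply_of_mem (p := fun x => x ∉ S) _ hx
  · intro σ
    apply Subtype.ext
    apply Equiv.ext
    intro x
    apply Subtype.ext
    show ((Equiv.Perm.ofSubtype (σ : Equiv.Perm {x : Fin m // x ∉ S})) (x : Fin m)) = _
    rw [Equiv.Perm.ofSubtype_apply_of_mem (p := fun x => x ∉ S) _ x.2]

private lemma fiber_card_aux {m : ℕ} (S : Finset (Fin m)) :
    (Finset.univ.filter fun π : Equiv.Perm (Fin m) =>
        (Finset.univ.filter fun i => π i = i) = S).card = numDerangements (m - S.card) := by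
  rw [← Fintype.card_subtype]
  have e1 : {π : Equiv.Perm (Fin m) // (Finset.univ.filter fun i => π i = i) = S}
      ≃ {π : Equiv.Perm (Fin m) // ∀ i, π i = i ↔ i ∈ S} :=
    Equiv.subtypeEquivRight (by
      intro π
      rw [Finset.ext_iff]
      simp)
  rw [Fintype.card_congr (e1.trans (fiberEquivAux S))]
  rw [card_derangements_eq_numDerangements, Fintype.card_subtype_compl, Fintype.card_fin,
    Fintype.card_coe]

private lemma count_fixedCard_aux {m l : ℕ} :
    (Finset.univ.filter fun π : Equiv.Perm (Fin m) => fixedCard π = l).card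
      = Nat.choose m l * numDerangements (m - l) := by
  rw [Finset.card_eq_sum_card_fiberwise
    (f := fun π : Equiv.Perm (Fin m) => Finset.univ.filter fun i => π i = i)
    (t := Finset.powersetCard l Finset.univ)
    (fun π hπ => by
      rw [Finset.mem_coe, Finset.mem_powersetCard_univ]
      exact (Finset.mem_filter.mp (Finset.mem_coe.mp hπ)).2)]
  have h : ∀ S ∈ Finset.powersetCard l (Finset.univ : Finset (Fin m)),
      (((Finset.univ.filter fun π : Equiv.Perm (Fin m) => fixedCard π = l).filter
        fun π => (Finset.univ.filter fun i => π i = i) = S)).card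
      = numDerangements (m - l) := by
    intro S hS
    rw [Finset.mem_powersetCard_univ] at hS
    rw [Finset.filter_filter]
    have : ∀ π : Equiv.Perm (Fin m),
        (fixedCard π = l ∧ (Finset.univ.filter fun i => π i = i) = S)
        ↔ (Finset.univ.filter fun i => π i = i) = S := by
      intro π
      constructor
      · exact fun h => h.2
      · intro h; exact ⟨by rw [fixedCard, h, hS], h⟩
    rw [Finset.filter_congr (fun π _ => this π), fiber_card_aux S, hS]
  rw [Finset.sum_congr rfl h, Finset.sum_const, Finset.card_powersetCard, Finset.card_univ,
    Fintype.card_fin, smul_eq_mul]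

private lemma sum_pow_fixed_aux {m : ℕ} :
    ∑ π : Equiv.Perm (Fin m), 2 ^ fixedCard π = Vnum m := by
  rw [← Finset.sum_fiberwise_of_maps_to (g := fun π : Equiv.Perm (Fin m) => fixedCard π)
    (t := Finset.range (m + 1))
    (fun π _ => by
      simp only [Finset.mem_range, Nat.lt_succ_iff, fixedCard]
      calc (Finset.univ.filter fun i => π i = i).card ≤ (Finset.univ : Finset (Fin m)).card :=
          Finset.card_filter_le _ _
        _ = m := by rw [Finset.card_univ, Fintype.card_fin])]
  rw [Vnum]
  apply Finset.sum_congr rfl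
  intro l _
  rw [Finset.sum_congr rfl (fun π hπ => by
    have h : fixedCard π = l := (Finset.mem_filter.mp hπ).2
    rw [h]), Finset.sum_const, count_fixedCard_aux, smul_eq_mul]
  ring

private lemma count_derangements_aux {m : ℕ} :
    (Finset.univ.filter fun π : Equiv.Perm (Fin m) => ∀ i, π i ≠ i).card = numDerangements m := by
  rw [← Fintype.card_subtype]
  rw [Fintype.card_congr (Equiv.subtypeEquivRight (p := fun π : Equiv.Perm (Fin m) => ∀ i, π i ≠ i)
    (q := fun π : Equiv.Perm (Fin m) => π ∈ derangements (Fin m)) (fun π => Iff.rfl))]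
  have h := card_derangements_eq_numDerangements (Fin m)
  rw [Fintype.card_fin] at h
  convert h using 2

private lemma EC_finite_aux {m : ℕ} (a : Fin m → Fin m → ℝ) (π : Equiv.Perm (Fin m)) :
    (ECset a π).Finite := by
  apply Set.Finite.of_finite_image (f := fun γ (i : Fin m) => decide (γ i = 1))
    (Set.toFinite _)
  intro γ hγ δ hδ h
  funext i
  by_cases hi : π i = i
  · have h1 := hγ.2.1 i hi
    have h2 := hδ.2.1 i hi
    have h3 : decide (γ i = 1) = decide (δ i = 1) := congrFun h i
    rw [decide_eq_decide] at h3
    rcases h1 with h1 | h1 <;> rcases h2 with h2 | h2 <;> simp_all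
  · rw [hγ.2.2 i hi, hδ.2.2 i hi]

private lemma cand_mem_EC_aux {m : ℕ} (v : Fin m → ℕ) (a : Fin m → Fin m → ℝ) (ha : GoodCoef a)
    (γ : Fin m → ℝ) (hγ : IsEqCand v a γ) : ∃ π, γ ∈ ECset a π := by
  set p : Fin m → Prop := fun i => 0 < γ i ∧ γ i < 1 with hp
  have key : ∀ x : Subtype p, ∃ y : Subtype p, (y : Fin m) ≠ (x : Fin m) ∧ γ y = a x y := by
    rintro ⟨i, hi⟩
    have h0 := hγ.2 i hi.1 hi.2
    rw [lamP, mul_eq_zero] at h0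
    rcases h0 with h0 | h0
    · exact absurd h0 (pow_ne_zero _ (by norm_num))
    · rw [Finset.prod_eq_zero_iff] at h0
      obtain ⟨k, hk, hk0⟩ := h0
      have hki : k ≠ i := Finset.ne_of_mem_erase hk
      have hγk : γ k = a i k := by linarith [sub_eq_zero.mp hk0]
      have hik : i ≠ k := hki.symm
      have hbound := ha.1 i k hik
      refine ⟨⟨k, ?_, ?_⟩, hki, hγk⟩
      · rw [hγk]; exact hbound.1
      · rw [hγk]; exact hbound.2
  choose f hf1 hf2 using key
  have hinj : Function.Injective f := by
    intro x y hxy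
    by_contra hne
    have hxy' : (x : Fin m) ≠ (y : Fin m) := fun h => hne (Subtype.ext h)
    have e1 : γ (f x) = a (x : Fin m) (f x) := hf2 x
    have e2 : γ (f y) = a (y : Fin m) (f y) := hf2 y
    rw [hxy] at e1
    have h1 : (x : Fin m) ≠ (f y : Fin m) := by rw [← hxy]; exact (hf1 x).symm
    have h2 : (y : Fin m) ≠ (f y : Fin m) := (hf1 y).symm
    exact ha.2 (f y) x y h1 h2 hxy' (by rw [← e1, e2])
  have hbij : Function.Bijective f := Finite.injective_iff_bijective.mp hinj
  set σ : Equiv.Perm (Subtype p) := Equiv.ofBijective f hbij with hσ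
  refine ⟨Equiv.Perm.ofSubtype σ.symm, hγ.1, ?_, ?_⟩
  · intro i hfix
    by_cases hi : p i
    · exfalso
      rw [Equiv.Perm.ofSubtype_apply_of_mem (p := p) σ.symm hi] at hfix
      have : σ.symm ⟨i, hi⟩ = ⟨i, hi⟩ := Subtype.ext hfix
      have h2 : σ ⟨i, hi⟩ = ⟨i, hi⟩ := by
        conv_lhs => rw [← this]
        exact σ.apply_symm_apply _
      have : f ⟨i, hi⟩ = ⟨i, hi⟩ := h2
      exact hf1 ⟨i, hi⟩ (by rw [this])
    · have hi' : ¬ (0 < γ i ∧ γ i < 1) := hi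
      rcases (hγ.1 i).1.eq_or_lt with h | h
      · exact Or.inl h.symm
      · right
        rcases (hγ.1 i).2.eq_or_lt with h2 | h2
        · exact h2
        · exact absurd ⟨h, h2⟩ hi'
  · intro j hj
    by_cases hjp : p j
    · rw [Equiv.Perm.ofSubtype_apply_of_mem (p := p) σ.symm hjp]
      set x := σ.symm ⟨j, hjp⟩ with hx
      have hfx : f x = ⟨j, hjp⟩ := σ.apply_symm_apply _
      have := hf2 x
      rw [hfx] at this
      exact this
    · exact absurd (Equiv.Perm.ofSubtype_apply_of_not_mem (p := p) σ.symm hjp) hj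

private lemma EC_disjoint_aux {m : ℕ} (a : Fin m → Fin m → ℝ) (ha : GoodCoef a)
    {π₁ π₂ : Equiv.Perm (Fin m)} (h : π₁ ≠ π₂) : Disjoint (ECset a π₁) (ECset a π₂) := by
  rw [Set.disjoint_left]
  intro γ h1 h2
  have : ∃ j, π₁ j ≠ π₂ j := by
    by_contra hc
    push_neg at hc
    exact h (Equiv.ext hc)
  obtain ⟨j, hj⟩ := this
  by_cases e1 : π₁ j = j <;> by_cases e2 : π₂ j = j
  · exact hj (e1.trans e2.symm)
  · have hb := h1.2.1 j e1
    have hv := h2.2.2 j e2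
    have hio := ha.1 (π₂ j) j e2
    rcases hb with hb | hb <;> rw [hb] at hv
    · exact absurd (hv ▸ hio.1) (lt_irrefl _)
    · exact absurd (hv ▸ hio.2) (lt_irrefl _)
  · have hb := h2.2.1 j e2
    have hv := h1.2.2 j e1
    have hio := ha.1 (π₁ j) j e1
    rcases hb with hb | hb <;> rw [hb] at hv
    · exact absurd (hv ▸ hio.1) (lt_irrefl _)
    · exact absurd (hv ▸ hio.2) (lt_irrefl _)
  · have hv1 := h1.2.2 j e1
    have hv2 := h2.2.2 j e2
    exact ha.2 j (π₁ j) (π₂ j) e1 e2 hj (hv1 ▸ hv2 ▸ rfl)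

private lemma derangement_nash_aux {m : ℕ} (v : Fin m → ℕ) (a : Fin m → Fin m → ℝ)
    (ha : GoodCoef a) (π : Equiv.Perm (Fin m)) (hπ : ∀ i, π i ≠ i) :
    {γ ∈ ECset a π | IsNashP v a γ} = {fun j => a (π j) j} := by
  set g : Fin m → ℝ := fun j => a (π j) j with hg
  have hcube : InCube g := fun j =>
    ⟨le_of_lt (ha.1 (π j) j (hπ j)).1, le_of_lt (ha.1 (π j) j (hπ j)).2⟩
  have hEC : g ∈ ECset a π := ⟨hcube, fun i hi => absurd hi (hπ i), fun j _ => rfl⟩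
  have hlam : ∀ i, lamP v a i g = 0 := by
    intro i
    rw [lamP]
    apply mul_eq_zero_of_right
    apply Finset.prod_eq_zero (i := π.symm i)
    · rw [Finset.mem_erase]
      refine ⟨fun hc => hπ i ?_, Finset.mem_univ _⟩
      · conv_lhs => rw [← hc]
        rw [π.apply_symm_apply]
    · show g (π.symm i) - a i (π.symm i) = 0
      rw [hg]
      simp only [π.apply_symm_apply]
      ring
  have hnash : IsNashP v a g :=
    ⟨⟨hcube, fun i _ _ => hlam i⟩, fun i _ => le_of_eq (hlam i), fun i _ => ge_of_eq (hlam i)⟩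
  ext γ
  simp only [Set.mem_setOf_eq, Set.mem_singleton_iff]
  constructor
  · rintro ⟨hEC', _⟩
    funext j
    exact hEC'.2.2 j (hπ j)
  · rintro rfl
    exact ⟨hEC, hnash⟩

end AuxStmt14

/-- A maximal product two-action game has a finite set of Nash equilibria
of cardinality `(V(m) + !m)/2`. -/
theorem stmt14 {m : ℕ} (hm : 1 ≤ m) (v : Fin m → ℕ) (hv : ∀ i, v i ≤ 1)
    (a : Fin m → Fin m → ℝ) (ha : GoodCoef a) (hmax : IsMaximal v a) :
    {γ : Fin m → ℝ | IsNashP v a γ}.Finite ∧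
    2 * {γ : Fin m → ℝ | IsNashP v a γ}.ncard = Vnum m + numDerangements m := by
  classical
  have hNfin : ∀ π : Equiv.Perm (Fin m), {γ ∈ ECset a π | IsNashP v a γ}.Finite :=
    fun π => (EC_finite_aux a π).subset (fun γ hγ => hγ.1)
  set T : Equiv.Perm (Fin m) → Finset (Fin m → ℝ) := fun π => (hNfin π).toFinset with hT
  have hNset : {γ : Fin m → ℝ | IsNashP v a γ} = ↑(Finset.univ.biUnion T) := by
    ext γ
    simp only [Set.mem_setOf_eq, Finset.coe_biUnion, Finset.coe_univ, Set.mem_iUnion,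
      Finset.mem_coe, Set.mem_univ, true_and]
    constructor
    · intro h
      obtain ⟨π, hπ⟩ := cand_mem_EC_aux v a ha γ h.1
      exact ⟨π, trivial, (hNfin π).mem_toFinset.mpr ⟨hπ, h⟩⟩
    · rintro ⟨π, -, hπ⟩
      exact ((hNfin π).mem_toFinset.mp hπ).2
  have hdisj : ∀ π₁ ∈ (Finset.univ : Finset (Equiv.Perm (Fin m))), ∀ π₂ ∈ Finset.univ,
      π₁ ≠ π₂ → Disjoint (T π₁) (T π₂) := by
    intro π₁ _ π₂ _ hne
    rw [hT]
    rw [Set.Finite.disjoint_toFinset]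
    exact (EC_disjoint_aux a ha hne).mono (fun γ hγ => hγ.1) (fun γ hγ => hγ.1)
  constructor
  · rw [hNset]; exact (Finset.univ.biUnion T).finite_toSet
  · rw [hNset, Set.ncard_coe_finset, Finset.card_biUnion hdisj, Finset.mul_sum]
    have hterm : ∀ π : Equiv.Perm (Fin m), 2 * (T π).card
        = 2 ^ fixedCard π + (if ∀ i, π i ≠ i then 1 else 0) := by
      intro π
      have hcard : (T π).card = {γ ∈ ECset a π | IsNashP v a γ}.ncard :=
        (Set.ncard_eq_toFinset_card _ (hNfin π)).symm
      by_cases hd : ∀ i, π i ≠ i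
      · rw [hcard, derangement_nash_aux v a ha π hd, Set.ncard_singleton, if_pos hd]
        have h0 : fixedCard π = 0 := by
          rw [fixedCard, Finset.card_eq_zero, Finset.filter_eq_empty_iff]
          exact fun i _ => hd i
        rw [h0]
        norm_num
      · have hd' : ∃ i, π i = i := by push_neg at hd; exact hd
        rw [hcard, hmax π hd', if_neg hd, add_zero]
        obtain ⟨i, hi⟩ := hd'
        have hl : 1 ≤ fixedCard π := Finset.card_pos.mpr
          ⟨i, Finset.mem_filter.mpr ⟨Finset.mem_univ _, hi⟩⟩
        obtain ⟨k, hk⟩ := Nat.exists_eq_add_of_le hl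
        rw [hk, Nat.add_sub_cancel_left, pow_add, pow_one]
    rw [Finset.sum_congr rfl (fun π _ => hterm π), Finset.sum_add_distrib, sum_pow_fixed_aux]
    congr 1
    rw [← Finset.card_filter, count_derangements_aux]
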